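/- Let p ∈ (1,∞) with conjugate exponent p′ (1/p + 1/p′ = 1) and let g : ℝ³×ℝ³ → ℝᵐ be measurable. Then there is a constant C depending only on p such that ‖ ∫_{ℝ³} |g(x,ξ)| dξ ‖_{L^p_x(ℝ³)} ≤ C ‖g‖_{L^∞(ℝ⁶)}^{1/p′} ( ∬_{ℝ⁶} |g(x,ξ)| |ξ|^{3(p−1)} dx dξ )^{1/p}. In particular, for a phase-space density f with velocity gradient ∇_ξ f, ‖∇_ξ f‖_{L^p_x L¹_ξ} ≤ C ‖∇_ξ f‖_{L^∞_{x,ξ}}^{1/p′} ( ∬_{ℝ⁶} |∇_ξ f| |ξ|^{3(p−1)} dx dξ )^{1/p}. -/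

import Mathlib

open MeasureTheory Real NNReal ENNReal RealInnerProductSpace
noncomputable section

/-- Physical space `ℝ³`. -/
abbrev E3 := EuclideanSpace ℝ (Fin 3)
/-- Phase space `ℝ⁶ = ℝ³ × ℝ³`. -/
abbrev Z6 := E3 × E3

/-- `∇K` for the Coulomb kernel `K(x) = σ/|x|` (σ = ±1): `∇K(x) = -σ x/|x|³`. -/
noncomputable def gradK (σ : ℝ) (x : E3) : E3 := (-σ / ‖x‖ ^ 3) • x

/-- Spatial density `ρ_f(x) = ∫ f(x,ξ) dξ`. -/
noncomputable def rhoDen (f : E3 → E3 → ℝ) (x : E3) : ℝ := ∫ ξ : E3, f x ξ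

/-- Self-induced force field `E_f = ∇K ∗ ρ_f`. -/
noncomputable def force (σ : ℝ) (f : E3 → E3 → ℝ) (x : E3) : E3 :=
  ∫ y : E3, rhoDen f y • gradK σ (x - y)

/-- Gradient in the position variable. -/
noncomputable def gradX (f : E3 → E3 → ℝ) (x ξ : E3) : E3 := gradient (fun x' => f x' ξ) x

/-- Gradient in the velocity variable `∇_ξ f`. -/
noncomputable def gradV (f : E3 → E3 → ℝ) (x ξ : E3) : E3 := gradient (fun ξ' => f x ξ') ξ

/-- `f` is a nonnegative solution of the Vlasov–Poisson equation
`∂_t f + ξ·∇_x f + E_f·∇_ξ f = 0` for times in the set `S`. -/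
noncomputable def IsVPSolutionOn (σ : ℝ) (S : Set ℝ) (f : ℝ → E3 → E3 → ℝ) : Prop :=
  (∀ t ∈ S, ∀ x ξ : E3, 0 ≤ f t x ξ) ∧
  ∀ t ∈ S, ∀ x ξ : E3,
    deriv (fun s => f s x ξ) t + ⟪ξ, gradX (f t) x ξ⟫ +
      ⟪force σ (f t) x, gradV (f t) x ξ⟫ = 0

/-- The Lorentz `L^{3,1}(ℝ³)` (quasi-)norm of a real valued function,
`∫₀^∞ |{|g| > s}|^{1/3} ds`. -/
noncomputable def lorentz31 (g : E3 → ℝ) : ℝ≥0∞ :=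
  ∫⁻ s in Set.Ioi (0:ℝ), (volume {x : E3 | s < |g x|}) ^ ((1:ℝ)/3)

/-- The weak `L^{3/2,∞}(ℝ³)` (quasi-)norm of a vector field,
`sup_{s>0} s |{|g| > s}|^{2/3}`. -/
noncomputable def weakL32 (g : E3 → E3) : ℝ≥0∞ :=
  ⨆ s : ℝ≥0, (s : ℝ≥0∞) * (volume {x : E3 | (s : ℝ) < ‖g x‖}) ^ ((2:ℝ)/3)

/-- The function `x ↦ ∫ |∇_ξ f(x,ξ)| dξ`. -/
noncomputable def xiMargGradNorm (f : E3 → E3 → ℝ) (x : E3) : ℝ := ∫ ξ : E3, ‖gradV f x ξ‖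

/-- `λ_f = ‖∇_ξ f‖_{L^{3,1}_x L¹_ξ}`. -/
noncomputable def lambdaL1 (f : E3 → E3 → ℝ) : ℝ≥0∞ := lorentz31 (xiMargGradNorm f)

/-- `L¹(ℝ⁶)` distance of two phase-space functions. -/
noncomputable def L1diff (f g : E3 → E3 → ℝ) : ℝ≥0∞ := ∫⁻ z : Z6, ‖f z.1 z.2 - g z.1 z.2‖₊

/-- Pointwise square root of a phase-space density. -/
noncomputable def sqrtF (f : E3 → E3 → ℝ) (x ξ : E3) : ℝ := Real.sqrt (f x ξ)

/-- `‖∇_ξ g‖_{L³_x L²_ξ}`. -/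
noncomputable def L3L2grad (g : E3 → E3 → ℝ) : ℝ≥0∞ :=
  (∫⁻ x : E3, (∫⁻ ξ : E3, ((‖gradV g x ξ‖₊ : ℝ≥0∞)) ^ (2:ℝ)) ^ ((3:ℝ)/2)) ^ ((1:ℝ)/3)

/-- `λ_f` for the L² weak-strong estimate:
`‖ρ_f‖_{L^∞}^{1/2} ‖∇_ξ √f‖_{L³_x L²_ξ} + C_∞^{1/2} ‖∇_ξ √f‖_{L^{3,1}_x L¹_ξ}`. -/
noncomputable def lambdaL2 (Cinf : ℝ) (f : E3 → E3 → ℝ) : ℝ≥0∞ :=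
  (eLpNorm (rhoDen f) ⊤ volume) ^ ((1:ℝ)/2) * L3L2grad (sqrtF f)
    + ENNReal.ofReal (Real.sqrt Cinf) * lorentz31 (xiMargGradNorm (sqrtF f))

lemma my_rpow_ne_top {x : ℝ≥0∞} (hx : x ≠ 0) (hx' : x ≠ ⊤) (y : ℝ) : x ^ y ≠ ⊤ := by
  simp [ENNReal.rpow_eq_top_iff, hx, hx']

lemma my_rpow_ne_zero {x : ℝ≥0∞} (hx : x ≠ 0) (hx' : x ≠ ⊤) (y : ℝ) : x ^ y ≠ 0 := by
  simp [ENNReal.rpow_eq_zero_iff, hx, hx']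

lemma key_opt (p : ℝ) (hp : 1 < p) (κ A M h : ℝ≥0∞)
    (hA0 : A = 0 → h = 0) (hM0 : M = 0 → h = 0)
    (hbound : ∀ ρ : ℝ≥0∞, ρ ≠ 0 → ρ ≠ ⊤ →
      h ≤ κ * A * ρ ^ (3:ℝ) + ρ ^ (-(3 * (p - 1))) * M) :
    h ≤ (κ + 1) * A ^ (1 - 1/p) * M ^ (1/p) := by
  have hp0 : (0:ℝ) < p := one_pos.trans hp
  have h1p : (0:ℝ) < 1 - 1/p := by
    rw [sub_pos]; exact (div_lt_one hp0).2 hp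
  have hC1 : (κ + 1) ≠ 0 := by simp
  rcases eq_or_ne M 0 with hM | hM
  · simp [hM0 hM]
  rcases eq_or_ne A 0 with hA | hA
  · simp [hA0 hA]
  rcases eq_or_ne A ⊤ with hAt | hAt
  · have h1 : A ^ (1 - 1/p) = ⊤ := by rw [hAt]; exact ENNReal.top_rpow_of_pos h1p
    have h2 : M ^ (1/p) ≠ 0 := by
      simp only [ne_eq, ENNReal.rpow_eq_zero_iff, not_or, not_and, not_lt]
      exact ⟨fun h => absurd h hM, fun _ => by positivity⟩
    rw [h1, ENNReal.mul_top hC1, ENNReal.top_mul h2]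
    exact le_top
  rcases eq_or_ne M ⊤ with hMt | hMt
  · have h1 : M ^ (1/p) = ⊤ := by rw [hMt]; exact ENNReal.top_rpow_of_pos (by positivity)
    have h2 : (κ + 1) * A ^ (1 - 1/p) ≠ 0 :=
      mul_ne_zero hC1 (my_rpow_ne_zero hA hAt _)
    rw [h1, ENNReal.mul_top h2]
    exact le_top
  set a : ℝ := 1 / (3 * p) with ha_def
  set ρ : ℝ≥0∞ := M ^ a * A ^ (-a) with hρ_def
  have hMa0 := my_rpow_ne_zero hM hMt
  have hMat := my_rpow_ne_top hM hMt
  have hAa0 := my_rpow_ne_zero hA hAt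
  have hAat := my_rpow_ne_top hA hAt
  have hρ0 : ρ ≠ 0 := mul_ne_zero (hMa0 a) (hAa0 (-a))
  have hρt : ρ ≠ ⊤ := ENNReal.mul_ne_top (hMat a) (hAat (-a))
  refine (hbound ρ hρ0 hρt).trans (le_of_eq ?_)
  have e3 : a * 3 = 1/p := by simp only [ha_def]; field_simp
  have e4 : (-a) * 3 = -(1/p) := by simp only [ha_def]; field_simp
  have e5 : a * (-(3 * (p - 1))) = 1/p - 1 := by
    simp only [ha_def]; field_simp; ring
  have e6 : (-a) * (-(3 * (p - 1))) = 1 - 1/p := by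
    simp only [ha_def]; field_simp
  have eρ3 : ρ ^ (3:ℝ) = M ^ (1/p) * A ^ (-(1/p)) := by
    rw [hρ_def, ENNReal.mul_rpow_of_ne_top (hMat a) (hAat (-a)),
      ← ENNReal.rpow_mul, ← ENNReal.rpow_mul, e3, e4]
  have eρq : ρ ^ (-(3 * (p - 1))) = M ^ (1/p - 1) * A ^ (1 - 1/p) := by
    rw [hρ_def, ENNReal.mul_rpow_of_ne_top (hMat a) (hAat (-a)),
      ← ENNReal.rpow_mul, ← ENNReal.rpow_mul, e5, e6]
  have eA : A * A ^ (-(1/p)) = A ^ (1 - 1/p) := by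
    nth_rewrite 1 [← ENNReal.rpow_one A]
    rw [← ENNReal.rpow_add _ _ hA hAt]; ring_nf
  have eM : M ^ (1/p - 1) * M = M ^ (1/p) := by
    nth_rewrite 2 [← ENNReal.rpow_one M]
    rw [← ENNReal.rpow_add _ _ hM hMt]; ring_nf
  rw [eρ3, eρq]
  calc κ * A * (M ^ (1/p) * A ^ (-(1/p))) + M ^ (1/p - 1) * A ^ (1 - 1/p) * M
      = κ * (A * A ^ (-(1/p))) * M ^ (1/p) + A ^ (1 - 1/p) * (M ^ (1/p - 1) * M) := by ring
    _ = (κ + 1) * A ^ (1 - 1/p) * M ^ (1/p) := by rw [eA, eM]; ring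

lemma main_est (p : ℝ) (hp : 1 < p) (m : ℕ) (g : E3 → E3 → EuclideanSpace ℝ (Fin m))
    (hg : Measurable fun z : Z6 => g z.1 z.2) :
    (∫⁻ x : E3, (∫⁻ ξ : E3, ‖g x ξ‖₊) ^ p) ^ (1/p) ≤
      (volume (Metric.ball (0:E3) 1) + 1) *
        (essSup (fun z : Z6 => (‖g z.1 z.2‖₊ : ℝ≥0∞)) volume) ^ (1 - 1/p) *
        (∫⁻ z : Z6, (‖g z.1 z.2‖₊ : ℝ≥0∞) * (‖z.2‖₊ : ℝ≥0∞) ^ (3 * (p - 1))) ^ (1/p) := by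
  have hp0 : (0:ℝ) < p := one_pos.trans hp
  have h1p : (0:ℝ) < 1 - 1/p := by rw [sub_pos]; exact (div_lt_one hp0).2 hp
  set q : ℝ := 3 * (p - 1) with hq_def
  have hq : 0 < q := by rw [hq_def]; nlinarith
  set κ : ℝ≥0∞ := volume (Metric.ball (0:E3) 1) with hκ_def
  have hκt : κ ≠ ⊤ := measure_ball_lt_top.ne
  set A : ℝ≥0∞ := essSup (fun z : Z6 => (‖g z.1 z.2‖₊ : ℝ≥0∞)) volume with hA_def
  set F : Z6 → ℝ≥0∞ := fun z => (‖g z.1 z.2‖₊ : ℝ≥0∞) * (‖z.2‖₊ : ℝ≥0∞) ^ q with hF_def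
  have hFm : Measurable F := (hg.nnnorm.coe_nnreal_ennreal).mul
    ((measurable_snd.nnnorm.coe_nnreal_ennreal).pow_const q)
  set M : E3 → ℝ≥0∞ := fun x => ∫⁻ ξ : E3, F (x, ξ) with hM_def
  set T : ℝ≥0∞ := ∫⁻ z : Z6, F z with hT_def
  have hton : ∫⁻ x : E3, M x = T := by
    rw [hT_def, Measure.volume_eq_prod, MeasureTheory.lintegral_prod _ hFm.aemeasurable]
  have hxi0 : ∀ᵐ ξ : E3, ξ ≠ (0:E3) := by
    have h1 : {ξ : E3 | ¬ ξ ≠ (0:E3)} = {0} := by ext ξ; simp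
    rw [ae_iff, h1]; exact measure_singleton _
  rcases eq_or_ne T 0 with hT0 | hT0
  · -- T = 0 : everything vanishes
    have hF0 : ∀ᵐ z : Z6, F z = 0 := (lintegral_eq_zero_iff hFm).1 hT0
    have hz2 : ∀ᵐ z : Z6, z.2 ≠ (0:E3) := by
      have h1 : {z : Z6 | ¬ z.2 ≠ (0:E3)} = Set.univ ×ˢ ({0} : Set E3) := by
        ext z
        simp only [Set.mem_setOf_eq, not_not, Set.mem_prod, Set.mem_univ,
          Set.mem_singleton_iff, true_and]
      rw [ae_iff, h1, Measure.volume_eq_prod, Measure.prod_prod,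
        measure_singleton, mul_zero]
    have hg0 : ∀ᵐ z : Z6, (‖g z.1 z.2‖₊ : ℝ≥0∞) = 0 := by
      filter_upwards [hF0, hz2] with z h1 h2
      rcases mul_eq_zero.1 h1 with h | h
      · exact h
      · refine absurd ?_ h2
        have : (‖z.2‖₊ : ℝ≥0∞) = 0 := (ENNReal.rpow_eq_zero_iff_of_pos hq).1 h
        simpa using this
    have hg0' : ∀ᵐ z ∂((volume : Measure E3).prod (volume : Measure E3)),
        (‖g z.1 z.2‖₊ : ℝ≥0∞) = 0 := by
      rw [← Measure.volume_eq_prod]; exact hg0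
    have hL : ∀ᵐ x : E3, (∫⁻ ξ : E3, (‖g x ξ‖₊ : ℝ≥0∞)) = 0 := by
      filter_upwards [Measure.ae_ae_of_ae_prod hg0'] with x hx
      rw [lintegral_congr_ae hx, lintegral_zero]
    have hLP : (∫⁻ x : E3, (∫⁻ ξ : E3, (‖g x ξ‖₊ : ℝ≥0∞)) ^ p) = 0 := by
      have heq : (fun x : E3 => (∫⁻ ξ : E3, (‖g x ξ‖₊ : ℝ≥0∞)) ^ p)
          =ᵐ[volume] (fun _ => (0:ℝ≥0∞)) :=
        hL.mono fun x hx => by dsimp only; rw [hx, ENNReal.zero_rpow_of_pos hp0]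
      rw [lintegral_congr_ae heq, lintegral_zero]
    rw [hLP, ENNReal.zero_rpow_of_pos (by positivity)]
    exact zero_le
  rcases eq_or_ne A ⊤ with hAt | hAt
  · have h1 : A ^ (1 - 1/p) = ⊤ := by rw [hAt]; exact ENNReal.top_rpow_of_pos h1p
    have h2 : T ^ (1/p) ≠ 0 := by
      simp only [ne_eq, ENNReal.rpow_eq_zero_iff, not_or, not_and, not_lt]
      exact ⟨fun h => absurd h hT0, fun _ => by positivity⟩
    rw [h1, ENNReal.mul_top (by simp : κ + 1 ≠ 0), ENNReal.top_mul h2]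
    exact le_top
  -- main case
  have hA_ae : ∀ᵐ z : Z6, (‖g z.1 z.2‖₊ : ℝ≥0∞) ≤ A := ENNReal.ae_le_essSup _
  have hA_ae'' : ∀ᵐ z ∂((volume : Measure E3).prod (volume : Measure E3)),
      (‖g z.1 z.2‖₊ : ℝ≥0∞) ≤ A := by
    rw [← Measure.volume_eq_prod]; exact hA_ae
  have hA_ae' : ∀ᵐ x : E3, ∀ᵐ ξ : E3, (‖g x ξ‖₊ : ℝ≥0∞) ≤ A :=
    Measure.ae_ae_of_ae_prod hA_ae''
  have hpt : ∀ᵐ x : E3, (∫⁻ ξ : E3, (‖g x ξ‖₊ : ℝ≥0∞)) ≤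
      (κ + 1) * A ^ (1 - 1/p) * (M x) ^ (1/p) := by
    filter_upwards [hA_ae'] with x hx
    have hFxm : Measurable fun ξ : E3 => F (x, ξ) := hFm.comp measurable_prodMk_left
    refine key_opt p hp κ A (M x) _ ?_ ?_ ?_
    · intro hA0
      have h0 : ∀ᵐ ξ : E3, (‖g x ξ‖₊ : ℝ≥0∞) = 0 :=
        hx.mono fun ξ hξ => le_antisymm (hA0 ▸ hξ) (zero_le)
      rw [lintegral_congr_ae h0, lintegral_zero]
    · intro hM0
      have h1 : ∀ᵐ ξ : E3, F (x, ξ) = 0 := (lintegral_eq_zero_iff hFxm).1 hM0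
      have h0 : ∀ᵐ ξ : E3, (‖g x ξ‖₊ : ℝ≥0∞) = 0 := by
        filter_upwards [h1, hxi0] with ξ hξ1 hξ2
        rcases mul_eq_zero.1 hξ1 with h | h
        · exact h
        · refine absurd ?_ hξ2
          have : (‖ξ‖₊ : ℝ≥0∞) = 0 := (ENNReal.rpow_eq_zero_iff_of_pos hq).1 h
          simpa using this
      rw [lintegral_congr_ae h0, lintegral_zero]
    · intro ρ hρ0 hρt
      set R : ℝ := ρ.toReal with hR_def
      have hR : 0 < R := ENNReal.toReal_pos hρ0 hρt
      have hρR : ρ = ENNReal.ofReal R := (ENNReal.ofReal_toReal hρt).symm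
      rw [← lintegral_add_compl (fun ξ : E3 => (‖g x ξ‖₊ : ℝ≥0∞))
        (measurableSet_ball : MeasurableSet (Metric.ball (0:E3) R))]
      refine add_le_add ?_ ?_
      · calc ∫⁻ ξ in Metric.ball (0:E3) R, (‖g x ξ‖₊ : ℝ≥0∞)
            ≤ ∫⁻ _ in Metric.ball (0:E3) R, A := lintegral_mono_ae (ae_restrict_of_ae hx)
          _ = A * volume (Metric.ball (0:E3) R) := setLIntegral_const _ _
          _ = A * (ENNReal.ofReal (R ^ 3) * κ) := by
              rw [Measure.addHaar_ball volume (0:E3) hR.le]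
              norm_num [finrank_euclideanSpace_fin, hκ_def]
          _ = κ * A * ρ ^ (3:ℝ) := by
              rw [hρR, ENNReal.ofReal_pow hR.le]
              rw [show ((3:ℝ)) = ((3:ℕ):ℝ) by norm_num, ENNReal.rpow_natCast]
              ring
      · have hρq_ne_top : ρ ^ (-q) ≠ ⊤ := my_rpow_ne_top hρ0 hρt _
        calc ∫⁻ ξ in (Metric.ball (0:E3) R)ᶜ, (‖g x ξ‖₊ : ℝ≥0∞)
            ≤ ∫⁻ ξ in (Metric.ball (0:E3) R)ᶜ, ρ ^ (-q) * F (x, ξ) := by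
              refine setLIntegral_mono' measurableSet_ball.compl fun ξ hξ => ?_
              have hRξ : R ≤ ‖ξ‖ := by
                simpa [Metric.mem_ball, dist_zero_right, not_lt] using hξ
              have h1 : ρ ≤ (‖ξ‖₊ : ℝ≥0∞) := by
                rw [hρR, ← enorm_eq_nnnorm, ← ofReal_norm]
                exact ENNReal.ofReal_le_ofReal hRξ
              have h2 : ρ ^ q ≤ (‖ξ‖₊ : ℝ≥0∞) ^ q := ENNReal.rpow_le_rpow h1 hq.le
              calc (‖g x ξ‖₊ : ℝ≥0∞) = ρ ^ (-q) * ρ ^ q * (‖g x ξ‖₊ : ℝ≥0∞) := by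
                    rw [← ENNReal.rpow_add _ _ hρ0 hρt]; norm_num
                _ ≤ ρ ^ (-q) * ((‖g x ξ‖₊ : ℝ≥0∞) * (‖ξ‖₊ : ℝ≥0∞) ^ q) := by
                    rw [mul_assoc]
                    exact mul_le_mul_right (by rw [mul_comm]; exact mul_le_mul_right h2 _) _
                _ = ρ ^ (-q) * F (x, ξ) := rfl
          _ = ρ ^ (-q) * ∫⁻ ξ in (Metric.ball (0:E3) R)ᶜ, F (x, ξ) :=
              lintegral_const_mul' _ _ hρq_ne_top
          _ ≤ ρ ^ (-q) * M x :=
              mul_le_mul_right (setLIntegral_le_lintegral _ _) _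
  have hconst_ne_top : (κ + 1) * A ^ (1 - 1/p) ≠ ⊤ :=
    ENNReal.mul_ne_top (by simp [hκt]) (ENNReal.rpow_ne_top_of_nonneg h1p.le hAt)
  have step : (∫⁻ x : E3, (∫⁻ ξ : E3, (‖g x ξ‖₊ : ℝ≥0∞)) ^ p) ≤
      ((κ + 1) * A ^ (1 - 1/p)) ^ p * T := by
    calc (∫⁻ x : E3, (∫⁻ ξ : E3, (‖g x ξ‖₊ : ℝ≥0∞)) ^ p)
        ≤ ∫⁻ x : E3, ((κ + 1) * A ^ (1 - 1/p) * (M x) ^ (1/p)) ^ p :=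
          lintegral_mono_ae (hpt.mono fun x hx => ENNReal.rpow_le_rpow hx hp0.le)
      _ = ∫⁻ x : E3, ((κ + 1) * A ^ (1 - 1/p)) ^ p * M x := by
          refine lintegral_congr fun x => ?_
          rw [ENNReal.mul_rpow_of_nonneg _ _ hp0.le, ← ENNReal.rpow_mul,
            one_div_mul_cancel hp0.ne', ENNReal.rpow_one]
      _ = ((κ + 1) * A ^ (1 - 1/p)) ^ p * ∫⁻ x : E3, M x :=
          lintegral_const_mul' _ _ (ENNReal.rpow_ne_top_of_nonneg hp0.le hconst_ne_top)
      _ = ((κ + 1) * A ^ (1 - 1/p)) ^ p * T := by rw [hton]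
  calc (∫⁻ x : E3, (∫⁻ ξ : E3, (‖g x ξ‖₊ : ℝ≥0∞)) ^ p) ^ (1/p)
      ≤ (((κ + 1) * A ^ (1 - 1/p)) ^ p * T) ^ (1/p) :=
        ENNReal.rpow_le_rpow step (by positivity)
    _ = (κ + 1) * A ^ (1 - 1/p) * T ^ (1/p) := by
        rw [ENNReal.mul_rpow_of_nonneg _ _ (by positivity : (0:ℝ) ≤ 1/p),
          ← ENNReal.rpow_mul, mul_one_div_cancel hp0.ne', ENNReal.rpow_one]

/-- **Interpolation inequality:** for `1 < p < ∞` there is `C = C(p)` with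
`‖∫ |g(x,ξ)| dξ‖_{L^p_x} ≤ C ‖g‖_{L^∞}^{1/p'} (∬ |g| |ξ|^{3(p-1)})^{1/p}`; in particular
for `g = ∇_ξ f`. -/
theorem Lp_interpolation_moment (p : ℝ) (hp : 1 < p) :
    ∃ C : ℝ≥0∞, 0 < C ∧ C ≠ ⊤ ∧
      (∀ (m : ℕ) (g : E3 → E3 → EuclideanSpace ℝ (Fin m)),
        Measurable (fun z : Z6 => g z.1 z.2) →
        (∫⁻ x : E3, (∫⁻ ξ : E3, ‖g x ξ‖₊) ^ p) ^ (1/p) ≤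
          C * (essSup (fun z : Z6 => (‖g z.1 z.2‖₊ : ℝ≥0∞)) volume) ^ (1 - 1/p) *
            (∫⁻ z : Z6, (‖g z.1 z.2‖₊ : ℝ≥0∞) * (‖z.2‖₊ : ℝ≥0∞) ^ (3 * (p - 1))) ^ (1/p)) ∧
      (∀ f : E3 → E3 → ℝ,
        Measurable (fun z : Z6 => gradV f z.1 z.2) →
        (∫⁻ x : E3, (∫⁻ ξ : E3, ‖gradV f x ξ‖₊) ^ p) ^ (1/p) ≤
          C * (essSup (fun z : Z6 => (‖gradV f z.1 z.2‖₊ : ℝ≥0∞)) volume) ^ (1 - 1/p) *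
            (∫⁻ z : Z6, (‖gradV f z.1 z.2‖₊ : ℝ≥0∞) * (‖z.2‖₊ : ℝ≥0∞) ^ (3 * (p - 1))) ^ (1/p)) := by
  refine ⟨volume (Metric.ball (0:E3) 1) + 1, ?_, ?_, ?_, ?_⟩
  · simp [pos_iff_ne_zero]
  · exact ENNReal.add_ne_top.2 ⟨measure_ball_lt_top.ne, ENNReal.one_ne_top⟩
  · exact fun m g hg => main_est p hp m g hg
  · exact fun f hf => main_est p hp 3 (gradV f) hf
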